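/- Define T(n,i) := ∑_{j=i}^{n} (−1)^{j−i} · 2^{n−j} · j! · S(n,j) · binom(j−1, i−1) for 1 ≤ i ≤ n. Let ψ : ℚ[x_0,…,x_N] → ℚ[x_0,…,x_N] be the ℚ-algebra homomorphism with ψ(x_0) = x_0 and ψ(x_n) = ∑_{i=1}^{n} T(n,i)·x_i for 1 ≤ n ≤ N, and let D be the basic Weitzenböck derivation, D(x_0) = 0 and D(x_n) = n·x_{n−1} for 1 ≤ n ≤ N. Then ψ intertwines D and the first Kravchuk derivation: D_{K1}(ψ(P)) = ψ(D(P)) for all P ∈ ℚ[x_0,…,x_N]. -/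

import Mathlib

/-- Stirling numbers of the second kind: the number of partitions of an `n`-element
set into `k` nonempty blocks (via the standard recurrence). -/
def stirling2 : ℕ → ℕ → ℕ
  | 0, 0 => 1
  | 0, _ + 1 => 0
  | _ + 1, 0 => 0
  | n + 1, k + 1 => stirling2 n k + (k + 1) * stirling2 n (k + 1)

/-- `T(n,i) = ∑_{j=i}^n (-1)^{j-i} 2^{n-j} j! S(n,j) binom(j-1,i-1)`. -/
noncomputable def T (n i : ℕ) : ℚ :=
  ∑ j ∈ Finset.Icc i n,
    (-1 : ℚ) ^ (j - i) * 2 ^ (n - j) * (Nat.factorial j) * stirling2 n j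
      * ((j - 1).choose (i - 1))

/-- The variable `x_i` of `ℚ[x_0,…,x_N]` (for `i ≤ N`). -/
noncomputable def Xv (N : ℕ) (i : ℕ) : MvPolynomial (Fin (N + 1)) ℚ :=
  if h : i ≤ N then MvPolynomial.X ⟨i, Nat.lt_succ_of_le h⟩ else 0

/-- The first Kravchuk derivation: `D_{K1}(x_0)=0`,
`D_{K1}(x_m)=∑_{i=1}^m ((1-(-1)^i)/(2i)) x_{m-i}`. -/
noncomputable def DK1 (N : ℕ) :
    Derivation ℚ (MvPolynomial (Fin (N + 1)) ℚ) (MvPolynomial (Fin (N + 1)) ℚ) :=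
  MvPolynomial.mkDerivation ℚ fun m : Fin (N + 1) =>
    ∑ i ∈ Finset.Icc 1 (m : ℕ),
      MvPolynomial.C ((1 - (-1 : ℚ) ^ i) / (2 * i)) * Xv N ((m : ℕ) - i)

/-- The basic Weitzenböck derivation: `D(x_0)=0`, `D(x_n)=n x_{n-1}`. -/
noncomputable def DW (N : ℕ) :
    Derivation ℚ (MvPolynomial (Fin (N + 1)) ℚ) (MvPolynomial (Fin (N + 1)) ℚ) :=
  MvPolynomial.mkDerivation ℚ fun n : Fin (N + 1) =>
    MvPolynomial.C (((n : ℕ) : ℚ)) * Xv N ((n : ℕ) - 1)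

/-- The `ℚ`-algebra homomorphism `ψ` with `ψ(x_0)=x_0`, `ψ(x_n)=∑_{i=1}^n T(n,i) x_i`. -/
noncomputable def psiAK1 (N : ℕ) :
    MvPolynomial (Fin (N + 1)) ℚ →ₐ[ℚ] MvPolynomial (Fin (N + 1)) ℚ :=
  MvPolynomial.aeval fun n : Fin (N + 1) =>
    if (n : ℕ) = 0 then Xv N 0
    else ∑ i ∈ Finset.Icc 1 (n : ℕ), MvPolynomial.C (T (n : ℕ) i) * Xv N i

lemma stirling2_eq_zero : ∀ {n k : ℕ}, n < k → stirling2 n k = 0 := by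
  intro n
  induction n with
  | zero => intro k hk; match k, hk with | k+1, _ => rfl
  | succ n ih =>
    intro k hk
    match k, hk with
    | k+1, hk =>
      show stirling2 n k + (k+1) * stirling2 n (k+1) = 0
      rw [ih (by omega), ih (by omega)]; ring

noncomputable def cK (k : ℕ) : ℚ := (1 - (-1 : ℚ) ^ k) / (2 * k)
noncomputable def eK (k : ℕ) : ℚ := (1 - (-1 : ℚ) ^ k) / 2

lemma cK_zero : cK 0 = 0 := by simp [cK]

lemma eK_add_two (k : ℕ) : eK (k + 2) = eK k := by
  simp [eK, pow_add]

lemma mul_cK (k : ℕ) : (k : ℚ) * cK k = eK k := by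
  rcases Nat.eq_zero_or_pos k with h | h
  · simp [h, cK, eK]
  · have hk : (k : ℚ) ≠ 0 := by positivity
    unfold cK eK; field_simp

lemma aux1 (p q : ℕ) :
    ((q : ℚ) + 1) * (p.choose (q+1)) = ((p : ℚ) - q) * (p.choose q) := by
  have hp : ((p+1).choose (q+1) : ℚ) = (p.choose q : ℚ) + (p.choose (q+1) : ℚ) := by
    rw [Nat.choose_succ_succ]; push_cast; ring
  have h := Nat.add_one_mul_choose_eq p q
  have h' : ((p : ℚ) + 1) * (p.choose q) = ((p+1).choose (q+1) : ℚ) * ((q : ℚ) + 1) := by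
    exact_mod_cast congrArg (Nat.cast : ℕ → ℚ) h
  linear_combination -h' - ((q : ℚ) + 1) * hp

lemma pw_pos (p q : ℕ) :
    ((p : ℚ) + 2) * ((p+1).choose (q+1)) - 2 * ((p : ℚ) + 1) * (p.choose (q+1))
      = ((q : ℚ) + 2) * ((p.choose q : ℚ) - (p.choose (q+2) : ℚ)) := by
  have hp : ((p+1).choose (q+1) : ℚ) = (p.choose q : ℚ) + (p.choose (q+1) : ℚ) := by
    rw [Nat.choose_succ_succ]; push_cast; ring
  have h1 := aux1 p q
  have h2 := aux1 p (q+1)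
  push_cast at h2
  linear_combination ((p : ℚ) + 2) * hp + h2 - h1

noncomputable def w (n i : ℕ) : ℚ :=
  if n = 0 then (if i = 0 then 1 else 0)
  else if 1 ≤ i ∧ i ≤ n then T n i else 0

lemma w_of_gt {n i : ℕ} (h : n < i) : w n i = 0 := by
  unfold w; split
  · rw [if_neg (by omega)]
  · rw [if_neg (by omega)]

lemma w_zero_right {n : ℕ} (h : 1 ≤ n) : w n 0 = 0 := by
  unfold w; rw [if_neg (by omega), if_neg (by omega)]

lemma w_zero_zero : w 0 0 = 1 := rfl

open Finset in
lemma w_as_sum_hi (n m : ℕ) :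
    w n (m+2) = ∑ j ∈ Finset.Icc m n,
      (-1 : ℚ) ^ (j - m) * 2 ^ (n - j) * (Nat.factorial j) * stirling2 n j
        * ((j - 1).choose (m+1)) := by
  rcases le_or_gt (m+2) n with h | h
  · have hn0 : n ≠ 0 := by omega
    have : w n (m+2) = T n (m+2) := by
      unfold w; rw [if_neg hn0, if_pos ⟨by omega, h⟩]
    rw [this]
    unfold T
    rw [Finset.sum_subset (Finset.Icc_subset_Icc_left (by omega : m ≤ m+2))]
    · apply Finset.sum_congr rfl
      intro j hj
      rw [Finset.mem_Icc] at hj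
      have h2 : (m + 2 - 1) = m + 1 := by omega
      rcases le_or_gt (m+2) j with hj3 | hj3
      · have h1 : j - m = (j - (m+2)) + 2 := by omega
        rw [h1, h2, pow_add]
        ring
      · have h0 : (j-1).choose (m+2-1) = 0 := Nat.choose_eq_zero_of_lt (by omega)
        have h0' : (j-1).choose (m+1) = 0 := Nat.choose_eq_zero_of_lt (by omega)
        rw [h0, h0']
        push_cast; ring
    · intro j hj hj2
      rw [Finset.mem_Icc] at hj hj2
      have : (j-1).choose (m+2-1) = 0 := Nat.choose_eq_zero_of_lt (by omega)
      rw [this]; push_cast; ring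
  · rw [w_of_gt h]
    symm
    apply Finset.sum_eq_zero
    intro j hj
    rw [Finset.mem_Icc] at hj
    have : (j-1).choose (m+1) = 0 := Nat.choose_eq_zero_of_lt (by omega)
    rw [this]; push_cast; ring

lemma w_as_sum_lo_pos (n m : ℕ) (hm : 1 ≤ m) (h : m ≤ n) :
    w n m = ∑ j ∈ Finset.Icc m n,
      (-1 : ℚ) ^ (j - m) * 2 ^ (n - j) * (Nat.factorial j) * stirling2 n j
        * ((j - 1).choose (m - 1)) := by
  have : w n m = T n m := by
    unfold w; rw [if_neg (by omega), if_pos ⟨hm, h⟩]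
  rw [this]; rfl

lemma w_as_sum_zero (n : ℕ) :
    w n 0 = ∑ j ∈ Finset.Icc 0 n,
      (-1 : ℚ) ^ (j - 0) * 2 ^ (n - j) * (Nat.factorial j) * stirling2 n j
        * (if j = 0 then (1:ℚ) else 0) := by
  rw [Finset.sum_eq_single_of_mem 0 (by simp)]
  · cases n with
    | zero => simp [w_zero_zero, stirling2]
    | succ n =>
      rw [w_zero_right (by omega)]
      have : stirling2 (n+1) 0 = 0 := rfl
      simp [this]
  · intro j hj hj0
    rw [if_neg hj0]; ring

lemma shift_sum (m n : ℕ) (g : ℕ → ℚ) :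
    ∑ j ∈ Finset.Icc (m+1) (n+1), g j = ∑ j ∈ Finset.Icc m n, g (j+1) := by
  rw [← Finset.map_add_right_Icc m n 1, Finset.sum_map]
  simp [addRightEmbedding_apply]

lemma w_succ (n m : ℕ) : w (n+1) (m+1) = ((m : ℚ)+1) * (w n m - w n (m+2)) := by
  rcases lt_or_ge n m with h | hmn
  · rw [w_of_gt (by omega : n+1 < m+1), w_of_gt (by omega : n < m+2), w_of_gt h]; ring
  · have hL : w (n+1) (m+1) = T (n+1) (m+1) := by
      unfold w; rw [if_neg (by omega), if_pos ⟨by omega, by omega⟩]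
    rw [hL]
    have step1 : T (n+1) (m+1) = ∑ j ∈ Finset.Icc m n,
        (-1:ℚ)^(j-m) * 2^(n-j) * ((j+1).factorial) * (stirling2 (n+1) (j+1)) * (j.choose m) := by
      unfold T
      rw [shift_sum]
      apply Finset.sum_congr rfl
      intro j hj
      have e1 : j + 1 - (m+1) = j - m := by omega
      have e2 : n + 1 - (j+1) = n - j := by omega
      have e3 : j + 1 - 1 = j := by omega
      have e4 : m + 1 - 1 = m := by omega
      rw [e1, e2, e3, e4]
    have step2 : T (n+1) (m+1) =
        (∑ j ∈ Finset.Icc m n, (-1:ℚ)^(j-m) * 2^(n-j) * (j.factorial) * (stirling2 n j)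
            * (((j:ℚ)+1) * (j.choose m)))
        + ∑ j ∈ Finset.Icc m n, (-1:ℚ)^(j-m) * 2^(n-j) * ((j+1).factorial) * ((j:ℚ)+1)
            * (stirling2 n (j+1)) * (j.choose m) := by
      rw [step1, ← Finset.sum_add_distrib]
      apply Finset.sum_congr rfl
      intro j hj
      have hst : (stirling2 (n+1) (j+1) : ℚ)
          = (stirling2 n j : ℚ) + ((j:ℚ)+1) * (stirling2 n (j+1) : ℚ) := by
        rw [show stirling2 (n+1) (j+1) = stirling2 n j + (j+1) * stirling2 n (j+1) from rfl]
        push_cast; ring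
      rw [hst, Nat.factorial_succ]
      push_cast; ring
    set f : ℕ → ℚ := fun j => (-1:ℚ)^(j-m) * 2^(n-j) * (j.factorial) * (stirling2 n j)
        * (2*(j:ℚ) * ((j-1).choose m)) with hf
    have step3 : (∑ j ∈ Finset.Icc m n, (-1:ℚ)^(j-m) * 2^(n-j) * ((j+1).factorial) * ((j:ℚ)+1)
            * (stirling2 n (j+1)) * (j.choose m))
        = ∑ j ∈ Finset.Icc m n, -(f j) := by
      have hB : ∀ j ∈ Finset.Icc m n, (-1:ℚ)^(j-m) * 2^(n-j) * ((j+1).factorial) * ((j:ℚ)+1)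
            * (stirling2 n (j+1)) * (j.choose m) = -(f (j+1)) := by
        intro j hj
        rw [Finset.mem_Icc] at hj
        rcases lt_or_ge j n with hjn | hjn
        · simp only [hf]
          have e1 : j + 1 - m = (j - m) + 1 := by omega
          have e2 : n - j = (n - (j+1)) + 1 := by omega
          have e3 : j + 1 - 1 = j := by omega
          rw [e1, e3, pow_succ]
          rw [show (2:ℚ)^(n-j) = 2^(n-(j+1)) * 2 by rw [e2, pow_succ]]
          push_cast [Nat.factorial_succ]
          ring
        · have h0 : stirling2 n (j+1) = 0 := stirling2_eq_zero (by omega)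
          simp only [hf, h0]
          have e3 : j + 1 - 1 = j := by omega
          rw [e3]
          push_cast [h0]
          ring
      have hneg : ∀ (s : Finset ℕ) (g : ℕ → ℚ), (∑ j ∈ s, -(g j)) = -∑ j ∈ s, g j :=
        fun s g => by simp
      rw [Finset.sum_congr rfl hB, hneg, ← shift_sum m n f]
      have htop : ∑ j ∈ Finset.Icc (m+1) (n+1), f j = ∑ j ∈ Finset.Icc (m+1) n, f j := by
        rw [Finset.sum_Icc_succ_top (by omega)]
        have : f (n+1) = 0 := by
          simp only [hf]
          rw [stirling2_eq_zero (by omega : n < n+1)]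
          push_cast; ring
        rw [this, add_zero]
      have hbot : ∑ j ∈ Finset.Icc m n, f j = ∑ j ∈ Finset.Icc (m+1) n, f j := by
        have hins : Finset.Icc m n = insert m (Finset.Icc (m+1) n) := by
          ext x; simp only [Finset.mem_Icc, Finset.mem_insert]; omega
        rw [hins, Finset.sum_insert (by simp [Finset.mem_Icc])]
        have : f m = 0 := by
          simp only [hf]
          rcases Nat.eq_zero_or_pos m with h0 | h0
          · subst h0; push_cast; ring
          · rw [Nat.choose_eq_zero_of_lt (by omega : m - 1 < m)]
            push_cast; ring
        rw [this, zero_add]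
      rw [htop, hneg _ f, hbot]
    rw [step2, step3, ← Finset.sum_add_distrib]
    rcases Nat.eq_zero_or_pos m with hm0 | hm0
    · subst hm0
      rw [w_as_sum_zero n, w_as_sum_hi n 0, ← Finset.sum_sub_distrib, Finset.mul_sum]
      apply Finset.sum_congr rfl
      intro j hj
      simp only [hf]
      have hpw : ((j:ℚ)+1) * (j.choose 0) - 2*(j:ℚ) * ((j-1).choose 0)
          = ((0:ℚ)+1) * ((if j = 0 then (1:ℚ) else 0) - ((j-1).choose (0+1))) := by
        cases j with
        | zero => norm_num
        | succ p =>
          simp [Nat.choose_one_right]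
          push_cast; ring
      push_cast at hpw ⊢
      linear_combination ((-1:ℚ)^(j-0) * 2^(n-j) * (j.factorial : ℚ) * (stirling2 n j : ℚ)) * hpw
    · obtain ⟨q, rfl⟩ : ∃ q, m = q + 1 := ⟨m - 1, by omega⟩
      rw [w_as_sum_lo_pos n (q+1) (by omega) hmn, w_as_sum_hi n (q+1),
        ← Finset.sum_sub_distrib, Finset.mul_sum]
      apply Finset.sum_congr rfl
      intro j hj
      rw [Finset.mem_Icc] at hj
      obtain ⟨p, rfl⟩ : ∃ p, j = p + 1 := ⟨j - 1, by omega⟩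
      simp only [hf, Nat.add_sub_cancel, show p + 1 - (q + 1) = p - q from by omega]
      have hpw := pw_pos p q
      push_cast at hpw ⊢
      linear_combination ((-1:ℚ)^(p-q) * 2^(n-(p+1)) * ((p+1).factorial : ℚ)
        * (stirling2 n (p+1) : ℚ)) * hpw

lemma shift_sum_left (m K : ℕ) (g : ℕ → ℚ) :
    ∑ i ∈ Finset.Icc (m+1) (m+K), g i = ∑ k ∈ Finset.Icc 1 K, g (m+k) := by
  rw [← Finset.map_add_left_Icc 1 K m, Finset.sum_map]
  simp [addLeftEmbedding_apply]

lemma tel (v : ℕ → ℚ) : ∀ K, ∑ k ∈ Finset.Icc 1 K, eK k * (v (k-1) - v (k+1))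
    = v 0 - eK K * v (K+1) - eK (K+1) * v K := by
  intro K
  induction K with
  | zero => norm_num [eK]
  | succ K ih =>
    rw [Finset.sum_Icc_succ_top (by omega), ih]
    have e1 : K + 1 - 1 = K := by omega
    rw [e1, ← eK_add_two K]
    ring

lemma w_rec {n : ℕ} (hn : 1 ≤ n) (i : ℕ) (hi : 1 ≤ i) :
    w n i = (i : ℚ) * (w (n-1) (i-1) - w (n-1) (i+1)) := by
  obtain ⟨n', rfl⟩ : ∃ n', n = n' + 1 := ⟨n - 1, by omega⟩
  obtain ⟨m, rfl⟩ : ∃ m, i = m + 1 := ⟨i - 1, by omega⟩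
  have := w_succ n' m
  simpa using this

lemma key : ∀ n, 1 ≤ n → ∀ m, (∑ i ∈ Finset.Icc (m+1) n, cK (i-m) * w n i)
    = (n : ℚ) * w (n-1) m := by
  intro n hn
  induction n, hn using Nat.le_induction with
  | base =>
    intro m
    match m with
    | 0 =>
      rw [show Finset.Icc 1 1 = {1} from rfl, Finset.sum_singleton]
      have h1 : w 1 1 = 1 := by
        have := w_succ 0 0
        rw [this, w_zero_zero, w_of_gt (by omega : (0:ℕ) < 2)]
        ring
      norm_num [cK, h1, w_zero_zero]
    | m + 1 =>
      rw [Finset.Icc_eq_empty (by omega), Finset.sum_empty, w_of_gt (by omega : 0 < m + 1)]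
      ring
  | succ n hn ih =>
    intro m
    rcases lt_or_ge n m with hm | hm
    · rw [Finset.Icc_eq_empty (by omega), Finset.sum_empty,
        w_of_gt (by omega : n + 1 - 1 < m)]
      ring
    -- m ≤ n
    have hdecomp : ∀ i ∈ Finset.Icc (m+1) (n+1), cK (i-m) * w (n+1) i
        = ((m:ℚ) * cK (i-m)) * (w n (i-1) - w n (i+1))
          + eK (i-m) * (w n (i-1) - w n (i+1)) := by
      intro i hi
      rw [Finset.mem_Icc] at hi
      have hw := w_rec (show 1 ≤ n+1 by omega) i (by omega)
      simp only [Nat.add_sub_cancel] at hw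
      rw [hw]
      have hsplit : (i : ℚ) * cK (i - m) = (m:ℚ) * cK (i-m) + eK (i-m) := by
        have h1 : (i : ℚ) = (m : ℚ) + ((i - m : ℕ) : ℚ) := by
          push_cast [Nat.cast_sub (show m ≤ i by omega)]; ring
        rw [← mul_cK (i-m)]
        rw [h1]; ring
      calc cK (i-m) * ((i:ℚ) * (w n (i-1) - w n (i+1)))
          = ((i:ℚ) * cK (i-m)) * (w n (i-1) - w n (i+1)) := by ring
        _ = _ := by rw [hsplit]; ring
    rw [Finset.sum_congr rfl hdecomp, Finset.sum_add_distrib]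
    -- telescoping part
    have htel : (∑ i ∈ Finset.Icc (m+1) (n+1), eK (i-m) * (w n (i-1) - w n (i+1)))
        = w n m := by
      have hmap : ∑ i ∈ Finset.Icc (m+1) (n+1), eK (i-m) * (w n (i-1) - w n (i+1))
          = ∑ k ∈ Finset.Icc 1 (n+1-m), eK k * (w n (m+k-1) - w n (m+k+1)) := by
        conv_lhs => rw [show n + 1 = m + (n+1-m) from by omega]
        rw [shift_sum_left m (n+1-m) (fun i => eK (i-m) * (w n (i-1) - w n (i+1)))]
        apply Finset.sum_congr rfl
        intro k hk
        rw [Finset.mem_Icc] at hk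
        have e1 : m + k - m = k := by omega
        rw [e1]
      rw [hmap]
      have := tel (fun t => w n (m+t)) (n+1-m)
      rw [show (∑ k ∈ Finset.Icc 1 (n+1-m), eK k * (w n (m+k-1) - w n (m+k+1)))
          = ∑ k ∈ Finset.Icc 1 (n+1-m), eK k * (w n (m+(k-1)) - w n (m+(k+1))) from
        Finset.sum_congr rfl (fun k hk => by
          rw [Finset.mem_Icc] at hk
          congr 3 <;> omega), this]
      rw [w_of_gt (show n < m + (n+1-m) by omega), w_of_gt (show n < m + (n+1-m+1) by omega)]
      simp
    rw [htel]
    -- the m-weighted part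
    rcases Nat.eq_zero_or_pos m with rfl | hm1
    · have hz : (∑ i ∈ Finset.Icc (0+1) (n+1), ((0:ℕ):ℚ) * cK (i-0) * (w n (i-1) - w n (i+1))) = 0 :=
        Finset.sum_eq_zero (fun i _ => by push_cast; ring)
      rw [hz, zero_add, w_zero_right hn, show (n+1:ℕ) - 1 = n from by omega, w_zero_right hn]
      ring
    · obtain ⟨m', rfl⟩ : ∃ m', m = m' + 1 := ⟨m - 1, by omega⟩
      have hS : (∑ i ∈ Finset.Icc (m'+1+1) (n+1), ((m'+1:ℕ):ℚ) * cK (i-(m'+1)) * (w n (i-1) - w n (i+1)))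
          = (((m'+1:ℕ)):ℚ) * ((n:ℚ) * w (n-1) m' - (n:ℚ) * w (n-1) (m'+2)) := by
        have hexp : ∀ i ∈ Finset.Icc (m'+1+1) (n+1), ((m'+1:ℕ):ℚ) * cK (i-(m'+1)) * (w n (i-1) - w n (i+1))
            = ((m'+1:ℕ):ℚ) * (cK (i-(m'+1)) * w n (i-1)) - ((m'+1:ℕ):ℚ) * (cK (i-(m'+1)) * w n (i+1)) := by
          intro i _; ring
        rw [Finset.sum_congr rfl hexp, Finset.sum_sub_distrib, ← Finset.mul_sum, ← Finset.mul_sum]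
        -- S1
        have hS1 : (∑ i ∈ Finset.Icc (m'+1+1) (n+1), cK (i-(m'+1)) * w n (i-1))
            = (n:ℚ) * w (n-1) m' := by
          rw [shift_sum (m'+1) n (fun i => cK (i-(m'+1)) * w n (i-1))]
          rw [← ih m']
          apply Finset.sum_congr rfl
          intro j hj
          rw [Finset.mem_Icc] at hj
          have e1 : j + 1 - (m'+1) = j - m' := by omega
          have e2 : j + 1 - 1 = j := by omega
          rw [e1, e2]
        have hS2 : (∑ i ∈ Finset.Icc (m'+1+1) (n+1), cK (i-(m'+1)) * w n (i+1))
            = (n:ℚ) * w (n-1) (m'+2) := by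
          have h1 : (∑ i ∈ Finset.Icc (m'+1+1) (n+1), cK (i-(m'+1)) * w n (i+1))
              = ∑ j ∈ Finset.Icc (m'+2+1) (n+2), cK (j-(m'+2)) * w n j := by
            rw [shift_sum (m'+2) (n+1) (fun j => cK (j-(m'+2)) * w n j)]
            apply Finset.sum_congr rfl
            intro i hi
            rw [Finset.mem_Icc] at hi
            have e1 : i + 1 - (m'+2) = i - (m'+1) := by omega
            rw [e1]
          rw [h1]
          have h2 : (∑ j ∈ Finset.Icc (m'+2+1) (n+2), cK (j-(m'+2)) * w n j)
              = ∑ j ∈ Finset.Icc (m'+2+1) n, cK (j-(m'+2)) * w n j := by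
            symm
            apply Finset.sum_subset
            · apply Finset.Icc_subset_Icc_right; omega
            · intro j hj hj2
              rw [Finset.mem_Icc] at hj hj2
              rw [w_of_gt (show n < j by omega)]
              ring
          rw [h2, ih (m'+2)]
        rw [hS1, hS2]
        ring
      rw [hS]
      have hw := w_rec (show 1 ≤ n by omega) (m'+1) (by omega)
      simp only [Nat.add_sub_cancel] at hw
      rw [show (n+1:ℕ) - 1 = n from by omega, hw]
      push_cast
      ring

open MvPolynomial

lemma reflect_sum {M : Type*} [AddCommMonoid M] (i : ℕ) (f g : ℕ → M)
    (h : ∀ k, 1 ≤ k → k ≤ i → f k = g (i - k)) :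
    ∑ k ∈ Finset.Icc 1 i, f k = ∑ m ∈ Finset.range i, g m := by
  apply Finset.sum_nbij' (i := fun k => i - k) (j := fun m => i - m)
  · intro a ha; simp only [Finset.mem_Icc] at ha; simp only [Finset.mem_range]; omega
  · intro a ha; simp only [Finset.mem_range] at ha; simp only [Finset.mem_Icc]; omega
  · intro a ha; simp only [Finset.mem_Icc] at ha; omega
  · intro a ha; simp only [Finset.mem_range] at ha; omega
  · intro a ha; simp only [Finset.mem_Icc] at ha; exact h a ha.1 ha.2

lemma Xv_eq {N i : ℕ} (h : i ≤ N) : Xv N i = X ⟨i, Nat.lt_succ_of_le h⟩ := dif_pos h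

lemma DK1_X (N : ℕ) (n : Fin (N+1)) :
    DK1 N (X n) = ∑ i ∈ Finset.Icc 1 (n : ℕ), C (cK i) * Xv N ((n : ℕ) - i) :=
  mkDerivation_X _ _ _

lemma DK1_Xv {N i : ℕ} (h : i ≤ N) :
    DK1 N (Xv N i) = ∑ k ∈ Finset.Icc 1 i, C (cK k) * Xv N (i - k) := by
  rw [Xv_eq h, DK1_X]

lemma psi_X {N n : ℕ} (h : n ≤ N) :
    psiAK1 N (X ⟨n, Nat.lt_succ_of_le h⟩) = ∑ i ∈ Finset.range (N+1), C (w n i) * Xv N i := by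
  unfold psiAK1
  rw [aeval_X]
  rcases Nat.eq_zero_or_pos n with rfl | hn
  · rw [if_pos rfl]
    rw [Finset.sum_eq_single_of_mem 0 (by simp)]
    · rw [show w 0 0 = 1 from rfl, map_one, one_mul]
    · intro i _ hi0
      rw [show w 0 i = 0 from by unfold w; rw [if_pos rfl, if_neg hi0], map_zero, zero_mul]
  · rw [if_neg (by simpa using Nat.pos_iff_ne_zero.mp hn)]
    have hcongr : ∀ i ∈ Finset.Icc 1 n, C (T n i) * Xv N i = C (w n i) * Xv N i := by
      intro i hi
      rw [Finset.mem_Icc] at hi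
      have : w n i = T n i := by
        unfold w; rw [if_neg (by omega), if_pos ⟨hi.1, hi.2⟩]
      rw [this]
    rw [Finset.sum_congr rfl hcongr]
    apply Finset.sum_subset
    · intro i hi
      rw [Finset.mem_Icc] at hi
      rw [Finset.mem_range]
      omega
    · intro i hi hi2
      rw [Finset.mem_range] at hi
      rw [Finset.mem_Icc] at hi2
      have : w n i = 0 := by
        rcases Nat.eq_zero_or_pos i with rfl | hi1
        · exact w_zero_right hn
        · exact w_of_gt (by omega)
      rw [this, map_zero, zero_mul]

lemma gen (N : ℕ) (n : Fin (N+1)) :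
    DK1 N (psiAK1 N (X n)) = psiAK1 N (DW N (X n)) := by
  obtain ⟨nv, hn⟩ := n
  have hnN : nv ≤ N := Nat.lt_succ_iff.mp hn
  have hDW : DW N (X ⟨nv, hn⟩) = C ((nv : ℚ)) * Xv N (nv - 1) := mkDerivation_X _ _ _
  rcases Nat.eq_zero_or_pos nv with rfl | hnv
  · rw [hDW]
    rw [psi_X hnN, show ((0:ℕ) : ℚ) = 0 from rfl, map_zero, zero_mul, map_zero]
    rw [map_sum]
    apply Finset.sum_eq_zero
    intro i hi
    rw [Finset.mem_range] at hi
    rw [← smul_eq_C_mul, Derivation.map_smul, DK1_Xv (by omega)]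
    rcases Nat.eq_zero_or_pos i with rfl | hi1
    · rw [show Finset.Icc 1 0 = ∅ from rfl, Finset.sum_empty, smul_zero]
    · rw [show w 0 i = 0 from by unfold w; rw [if_pos rfl, if_neg (by omega)], zero_smul]
  · -- nv ≥ 1
    rw [psi_X hnN, map_sum]
    have hterm : ∀ i ∈ Finset.range (N+1),
        DK1 N (C (w nv i) * Xv N i)
          = ∑ m ∈ Finset.range (N+1), C (w nv i * cK (i - m)) * Xv N m := by
      intro i hi
      rw [Finset.mem_range] at hi
      rw [← smul_eq_C_mul, Derivation.map_smul, DK1_Xv (by omega), Finset.smul_sum]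
      have h1 : ∀ k ∈ Finset.Icc 1 i,
          w nv i • (C (cK k) * Xv N (i - k)) = C (w nv i * cK k) * Xv N (i - k) := by
        intro k _
        rw [smul_eq_C_mul, map_mul, mul_assoc]
      rw [Finset.sum_congr rfl h1]
      -- reindex k ↦ i - k
      rw [reflect_sum i (fun k => C (w nv i * cK k) * Xv N (i - k))
        (fun m => C (w nv i * cK (i - m)) * Xv N m)
        (fun k h1k h2k => by
          rw [show i - (i - k) = k from by omega])]
      -- extend range i to range (N+1)
      apply Finset.sum_subset
      · intro m hm
        rw [Finset.mem_range] at hm ⊢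
        omega
      · intro m hm hm2
        rw [Finset.mem_range] at hm hm2
        rw [show i - m = 0 from by omega, cK_zero, mul_zero, map_zero, zero_mul]
    rw [Finset.sum_congr rfl hterm, Finset.sum_comm]
    -- now LHS = ∑_m ∑_i C (w nv i * cK (i-m)) * Xv N m
    have hL : ∀ m ∈ Finset.range (N+1),
        (∑ i ∈ Finset.range (N+1), C (w nv i * cK (i - m)) * Xv N m)
          = C ((nv : ℚ) * w (nv-1) m) * Xv N m := by
      intro m _
      rw [← Finset.sum_mul, ← map_sum]
      congr 2
      have hsub : ∑ i ∈ Finset.range (N+1), w nv i * cK (i - m)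
          = ∑ i ∈ Finset.Icc (m+1) nv, w nv i * cK (i - m) := by
        symm
        apply Finset.sum_subset
        · intro i hi
          rw [Finset.mem_Icc] at hi
          rw [Finset.mem_range]
          omega
        · intro i hi hi2
          rw [Finset.mem_range] at hi
          rw [Finset.mem_Icc] at hi2
          rcases le_or_gt i m with h | h
          · rw [show i - m = 0 from by omega, cK_zero, mul_zero]
          · rw [w_of_gt (by omega), zero_mul]
      rw [hsub, show (∑ i ∈ Finset.Icc (m+1) nv, w nv i * cK (i - m))
          = ∑ i ∈ Finset.Icc (m+1) nv, cK (i - m) * w nv i from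
        Finset.sum_congr rfl (fun i _ => mul_comm _ _)]
      exact key nv hnv m
    rw [Finset.sum_congr rfl hL, hDW]
    -- RHS
    rw [map_mul, show (C ((nv:ℚ)) : MvPolynomial (Fin (N+1)) ℚ) = algebraMap ℚ _ ((nv:ℚ)) from rfl,
      AlgHom.commutes, Xv_eq (show nv - 1 ≤ N by omega), psi_X (show nv - 1 ≤ N by omega)]
    rw [show algebraMap ℚ (MvPolynomial (Fin (N+1)) ℚ) ((nv:ℚ)) = C ((nv:ℚ)) from rfl]
    rw [Finset.mul_sum]
    apply Finset.sum_congr rfl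
    intro m _
    rw [← mul_assoc, ← map_mul]

/-- `ψ` intertwines the basic Weitzenböck derivation and the first Kravchuk
derivation: `D_{K1}(ψ(P)) = ψ(D(P))` for all `P`. -/
theorem psiAK1_intertwines (N : ℕ) (P : MvPolynomial (Fin (N + 1)) ℚ) :
    DK1 N (psiAK1 N P) = psiAK1 N (DW N P) := by
  induction P using MvPolynomial.induction_on with
  | C a =>
    rw [show (MvPolynomial.C a : MvPolynomial (Fin (N+1)) ℚ) = algebraMap ℚ _ a from rfl,
      AlgHom.commutes, Derivation.map_algebraMap, Derivation.map_algebraMap, map_zero]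
  | add p q hp hq => rw [map_add, map_add, hp, hq, map_add, map_add]
  | mul_X p n hp =>
    simp only [map_mul, Derivation.leibniz, smul_eq_mul, map_add, map_mul, hp, gen]
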